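/- Let Z ⊆ ℝ^N be a convex set, let r : Z → ℝ be convex and differentiable, and let z₁, z₂, z₃ ∈ Z with c = (z₁ + z₂ + z₃)/3. Define the Bregman divergence V_x(y) = r(y) − r(x) − ⟨∇r(x), y − x⟩. Then V_{z₁}(z₂) + V_{z₂}(z₃) + V_{z₁}(z₃) ≥ r(z₁) + r(z₂) + r(z₃) − 3·r(c). -/

import Mathlib

open Filter Topology

lemma grad_ineq {N : ℕ} {Z : Set (EuclideanSpace ℝ (Fin N))}
    {r : EuclideanSpace ℝ (Fin N) → ℝ} {G x y : EuclideanSpace ℝ (Fin N)}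
    (hconv : ConvexOn ℝ Z r) (hg : HasGradientAt r G x) (hx : x ∈ Z) (hy : y ∈ Z) :
    r x + inner ℝ G (y - x) ≤ r y := by
  set f : ℝ → ℝ := fun t => r (x + t • (y - x)) with hf
  have hline : HasDerivAt (fun t : ℝ => x + t • (y - x)) (y - x) 0 := by
    simpa using ((hasDerivAt_id (0:ℝ)).smul_const (y - x)).const_add x
  have hd : HasDerivAt f (inner ℝ G (y - x) : ℝ) 0 := by
    have := HasFDerivAt.comp_hasDerivAt 0 (by simpa using hg.hasFDerivAt) hline
    exact this
  have hslope : Tendsto (slope f 0) (𝓝[≠] 0) (𝓝 (inner ℝ G (y - x) : ℝ)) :=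
    hasDerivAt_iff_tendsto_slope.mp hd
  have hslope' : Tendsto (slope f 0) (𝓝[>] 0) (𝓝 (inner ℝ G (y - x) : ℝ)) :=
    hslope.mono_left (nhdsWithin_mono 0 (fun t ht => ne_of_gt ht))
  have hbound : ∀ᶠ t in 𝓝[>] (0:ℝ), slope f 0 t ≤ r y - r x := by
    filter_upwards [Ioo_mem_nhdsGT_of_mem (by norm_num : (0:ℝ) ∈ Set.Ico 0 1)] with t ht
    have ht0 : 0 < t := ht.1
    have ht1 : t < 1 := ht.2
    have hmem : f t ≤ (1 - t) * r x + t * r y := by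
      have := hconv.2 hx hy (by linarith : (0:ℝ) ≤ 1 - t) ht0.le (by ring)
      have heq : (1 - t) • x + t • y = x + t • (y - x) := by
        module
      simpa [hf, heq, smul_eq_mul] using this
    have f0 : f 0 = r x := by simp [hf]
    rw [slope_def_field, div_le_iff₀ (by linarith : (0:ℝ) < t - 0)]
    simp only [f0]
    nlinarith [hmem]
  have := le_of_tendsto hslope' hbound
  linarith

theorem stmt13 {N : ℕ} (Z : Set (EuclideanSpace ℝ (Fin N))) (hZ : Convex ℝ Z)
    (r : EuclideanSpace ℝ (Fin N) → ℝ) (g : EuclideanSpace ℝ (Fin N) → EuclideanSpace ℝ (Fin N))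
    (hconv : ConvexOn ℝ Z r) (hgrad : ∀ z ∈ Z, HasGradientAt r (g z) z)
    (z₁ z₂ z₃ : EuclideanSpace ℝ (Fin N)) (h1 : z₁ ∈ Z) (h2 : z₂ ∈ Z) (h3 : z₃ ∈ Z) :
    r z₁ + r z₂ + r z₃ - 3 * r ((3 : ℝ)⁻¹ • (z₁ + z₂ + z₃)) ≤
      (r z₂ - r z₁ - inner ℝ (g z₁) (z₂ - z₁)) +
      (r z₃ - r z₂ - inner ℝ (g z₂) (z₃ - z₂)) +
      (r z₃ - r z₁ - inner ℝ (g z₁) (z₃ - z₁)) := by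
  set c := (3 : ℝ)⁻¹ • (z₁ + z₂ + z₃) with hc
  have hcZ : c ∈ Z := by
    have := hZ h1 (hZ h2 h3 (by norm_num : (0:ℝ) ≤ 1/2) (by norm_num : (0:ℝ) ≤ 1/2) (by norm_num))
      (by norm_num : (0:ℝ) ≤ 1/3) (by norm_num : (0:ℝ) ≤ 2/3) (by norm_num)
    have heq : (1/3 : ℝ) • z₁ + (2/3 : ℝ) • ((1/2 : ℝ) • z₂ + (1/2 : ℝ) • z₃) = c := by
      rw [hc]; module
    rwa [heq] at this
  have A : r z₁ + inner ℝ (g z₁) (c - z₁) ≤ r c := grad_ineq hconv (hgrad z₁ h1) h1 hcZ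
  have B : r z₂ + inner ℝ (g z₂) (z₃ - z₂) ≤ r z₃ := grad_ineq hconv (hgrad z₂ h2) h2 h3
  have hce : c - z₁ = (3:ℝ)⁻¹ • ((z₂ - z₁) + (z₃ - z₁)) := by rw [hc]; module
  have hinner : (inner ℝ (g z₁) (c - z₁) : ℝ) =
      (3:ℝ)⁻¹ * (inner ℝ (g z₁) (z₂ - z₁) + inner ℝ (g z₁) (z₃ - z₁)) := by
    rw [hce, inner_smul_right, inner_add_right]
  rw [hinner] at A
  linarith
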